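/- Let q ≥ 2 and k ≥ b ≥ 1 be integers. Then Σ_{i=0}^{k} ⌈q^{b-1}·(q^k - q^{k-b})/q^i⌉ = (q^b - 1)·(q^k - 1)/(q - 1) + q^{b-1}. -/
import Mathlib


/-- `Σ_{i=0}^{k} ⌈q^{b-1}·(q^k - q^{k-b})/q^i⌉ = (q^b - 1)·(q^k - 1)/(q - 1) + q^{b-1}`,
where the division on the right-hand side is exact. -/
theorem stmt14 (q k b : ℕ) (hq : 2 ≤ q) (hb : 1 ≤ b) (hkb : b ≤ k) :
    (∑ i ∈ Finset.range (k + 1),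
        ⌈((q ^ (b - 1) * (q ^ k - q ^ (k - b)) : ℕ) : ℚ) / (q : ℚ) ^ i⌉)
      = (((q ^ b - 1) * (q ^ k - 1) / (q - 1) + q ^ (b - 1) : ℕ) : ℤ) := by
  have hk1 : 1 ≤ k := le_trans hb hkb
  have hq0 : (0:ℚ) < (q:ℚ) := by positivity
  set N : ℕ := q ^ (b - 1) * (q ^ k - q ^ (k - b)) with hN
  have hNeq : N = q ^ (k + b - 1) - q ^ (k - 1) := by
    rw [hN, Nat.mul_sub, ← pow_add, ← pow_add]
    congr 2 <;> omega
  set S : ℕ := ∑ j ∈ Finset.range k, q ^ j with hS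
  -- geometric sum in ℕ
  have hgeo : (q - 1) * S = q ^ k - 1 := by
    have hZ : ((q:ℤ) - 1) * (S:ℤ) = (q:ℤ) ^ k - 1 := by
      rw [hS]
      push_cast
      rw [mul_comm]
      exact geom_sum_mul (q:ℤ) k
    have h1 : 1 ≤ q ^ k := Nat.one_le_pow _ _ (by omega)
    zify [h1, show 1 ≤ q by omega]
    exact_mod_cast hZ
  -- terms for i < k
  have hterm : ∀ i ∈ Finset.range k,
      ⌈(N:ℚ) / (q:ℚ) ^ i⌉ = ((q ^ (b + (k - 1 - i)) - q ^ (k - 1 - i) : ℕ) : ℤ) := by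
    intro i hi
    rw [Finset.mem_range] at hi
    have hfac : N = q ^ i * (q ^ (b + (k - 1 - i)) - q ^ (k - 1 - i)) := by
      rw [hNeq, Nat.mul_sub, ← pow_add, ← pow_add]
      congr 2 <;> omega
    have : (N:ℚ) / (q:ℚ) ^ i = ((q ^ (b + (k - 1 - i)) - q ^ (k - 1 - i) : ℕ) : ℚ) := by
      rw [hfac]
      push_cast
      field_simp
    rw [this, Int.ceil_natCast]
  -- last term
  have hlast : ⌈(N:ℚ) / (q:ℚ) ^ k⌉ = ((q ^ (b - 1) : ℕ) : ℤ) := by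
    have hle : q ^ (k - 1) ≤ q ^ (k + b - 1) := Nat.pow_le_pow_right (by omega) (by omega)
    have hNQ : (N:ℚ) = (q:ℚ) ^ (k + b - 1) - (q:ℚ) ^ (k - 1) := by
      rw [hNeq, Nat.cast_sub hle]; push_cast; ring
    have e1 : (q:ℚ) ^ (b - 1) * (q:ℚ) ^ k = (q:ℚ) ^ (k + b - 1) := by
      rw [← pow_add]; congr 1; omega
    have e2 : (q:ℚ) ^ (k - 1) * (q:ℚ) = (q:ℚ) ^ k := by
      rw [← pow_succ]; congr 1; omega
    have hpk : (0:ℚ) < (q:ℚ) ^ k := by positivity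
    have hpk1 : (0:ℚ) < (q:ℚ) ^ (k - 1) := by positivity
    rw [Int.ceil_eq_iff]
    constructor
    · rw [lt_div_iff₀ hpk]
      push_cast
      nlinarith [hNQ, e1, e2, hpk1, show (2:ℚ) ≤ (q:ℚ) by exact_mod_cast hq]
    · rw [div_le_iff₀ hpk]
      push_cast
      nlinarith [hNQ, e1]
  -- assemble
  rw [Finset.sum_range_succ, hlast, Finset.sum_congr rfl hterm]
  have hsum : ∑ i ∈ Finset.range k, ((q ^ (b + (k - 1 - i)) - q ^ (k - 1 - i) : ℕ) : ℤ)
      = (((q ^ b - 1) * S : ℕ) : ℤ) := by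
    rw [← Nat.cast_sum]
    congr 1
    have hrefl := Finset.sum_range_reflect (fun j => q ^ (b + j) - q ^ j) k
    calc ∑ i ∈ Finset.range k, (q ^ (b + (k - 1 - i)) - q ^ (k - 1 - i))
        = ∑ j ∈ Finset.range k, (q ^ (b + j) - q ^ j) := hrefl
      _ = ∑ j ∈ Finset.range k, (q ^ b - 1) * q ^ j := by
          apply Finset.sum_congr rfl
          intro j _
          rw [Nat.sub_mul, one_mul, pow_add]
      _ = (q ^ b - 1) * S := by rw [hS, Finset.mul_sum]
  rw [hsum]
  -- RHS division is exact
  have hdiv : (q ^ b - 1) * (q ^ k - 1) / (q - 1) = (q ^ b - 1) * S := by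
    rw [← hgeo]
    rw [show (q ^ b - 1) * ((q - 1) * S) = (q - 1) * ((q ^ b - 1) * S) by ring]
    exact Nat.mul_div_cancel_left _ (by omega)
  rw [hdiv]
  push_cast
  ring
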